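/- Let T be a tree with n leaves, L ⊆ leaves(T), τ ≥ 0. Then Ψ̂_T(L) ≥ τ if and only if the minimum s-t cut (equivalently the maximum s-t flow) in T_{L,τ} equals n·τ. -/

import Mathlib

open Finset
open scoped ENNReal

/-- Weight of the (directed) cut leaving `S` in a graph with capacities `c`. -/
noncomputable def treeCutE {V : Type*} [Fintype V] [DecidableEq V] (c : V → V → ℝ≥0∞)
    (S : Finset V) : ℝ≥0∞ :=
  ∑ u ∈ S, ∑ v ∈ Sᶜ, c u v

/-- `λ(A,B)`: minimum weight of a cut separating `A` from `B`. -/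
noncomputable def lamE {V : Type*} [Fintype V] [DecidableEq V] (c : V → V → ℝ≥0∞)
    (A B : Finset V) : ℝ≥0∞ :=
  ⨅ S ∈ {S : Finset V | A ⊆ S ∧ Disjoint S B}, treeCutE c S

/-- `Ψ̂_T(L)` for the tree with edge weights `w` and leaf set `leaves`. -/
noncomputable def PsiHatE {V : Type*} [Fintype V] [DecidableEq V] (w : V → V → ℝ≥0∞)
    (leaves L : Finset V) : ℝ≥0∞ :=
  ⨅ S ∈ {S : Finset V | S.Nonempty ∧ S ⊆ leaves \ L},
    lamE w S (leaves \ S) / (S.card : ℝ≥0∞)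

/-- Capacities of the flow graph `T_{L,τ}`: all tree edges, an edge of capacity `τ` between
the source `s = Sum.inr true` and every leaf, and an edge of capacity `∞` between every
vertex of `L` and the sink `t = Sum.inr false`. -/
noncomputable def flowW {V : Type*} [DecidableEq V] (w : V → V → ℝ≥0∞)
    (leaves L : Finset V) (τ : ℝ≥0∞) : (V ⊕ Bool) → (V ⊕ Bool) → ℝ≥0∞
  | Sum.inl u, Sum.inl v => w u v
  | Sum.inr true, Sum.inl v => if v ∈ leaves then τ else 0
  | Sum.inl v, Sum.inr true => if v ∈ leaves then τ else 0
  | Sum.inl v, Sum.inr false => if v ∈ L then ⊤ else 0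
  | Sum.inr false, Sum.inl v => if v ∈ L then ⊤ else 0
  | Sum.inr _, Sum.inr _ => 0

/-- The value of the minimum `s`-`t` cut (= maximum `s`-`t` flow) in `T_{L,τ}`. -/
noncomputable def minSTcut {V : Type*} [Fintype V] [DecidableEq V] (w : V → V → ℝ≥0∞)
    (leaves L : Finset V) (τ : ℝ≥0∞) : ℝ≥0∞ :=
  lamE (flowW w leaves L τ) {Sum.inr true} {Sum.inr false}

set_option linter.unusedSectionVars false

section Aux
variable {V : Type*} [Fintype V] [DecidableEq V]
variable (w : V → V → ℝ≥0∞) (leaves L : Finset V) (τ : ℝ≥0∞)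

lemma flowW_inl_inl (u v : V) :
    flowW w leaves L τ (Sum.inl u) (Sum.inl v) = w u v := rfl
lemma flowW_s_inl (v : V) :
    flowW w leaves L τ (Sum.inr true) (Sum.inl v) = if v ∈ leaves then τ else 0 := rfl
lemma flowW_inl_t (v : V) :
    flowW w leaves L τ (Sum.inl v) (Sum.inr false) = if v ∈ L then ⊤ else 0 := rfl
lemma flowW_s_t :
    flowW w leaves L τ (Sum.inr true) (Sum.inr false) = 0 := rfl

lemma compl_lift (S' : Finset V) :
    (S'.image Sum.inl ∪ {Sum.inr true} : Finset (V ⊕ Bool))ᶜ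
      = S'ᶜ.image Sum.inl ∪ {Sum.inr false} := by
  ext x
  cases x with
  | inl v => simp
  | inr b => cases b <;> simp

lemma S_decomp (S : Finset (V ⊕ Bool)) (hs : Sum.inr true ∈ S) (ht : Sum.inr false ∉ S) :
    S = (Finset.univ.filter (fun v => Sum.inl v ∈ S)).image Sum.inl ∪ {Sum.inr true} := by
  ext x
  cases x with
  | inl v => simp
  | inr b => cases b <;> simp [hs, ht]

lemma cut_formula (S' : Finset V) :
    treeCutE (flowW w leaves L τ) (S'.image Sum.inl ∪ {Sum.inr true})
      = treeCutE w S' + (leaves \ S').card * τ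
        + ∑ u ∈ S', (if u ∈ L then (⊤ : ℝ≥0∞) else 0) := by
  classical
  have hinj : ∀ (s : Finset V), ∀ x ∈ s, ∀ y ∈ s,
      (Sum.inl x : V ⊕ Bool) = Sum.inl y → x = y := by
    intro s x _ y _ h; exact Sum.inl_injective h
  unfold treeCutE
  rw [compl_lift]
  have inner : ∀ u : V ⊕ Bool,
      ∑ v ∈ S'ᶜ.image Sum.inl ∪ {Sum.inr false}, flowW w leaves L τ u v
      = ∑ v ∈ S'ᶜ, flowW w leaves L τ u (Sum.inl v) + flowW w leaves L τ u (Sum.inr false) := by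
    intro u
    rw [Finset.sum_union (by simp), Finset.sum_image (hinj _), Finset.sum_singleton]
  rw [Finset.sum_union (by simp), Finset.sum_image (hinj _), Finset.sum_singleton]
  simp only [inner, flowW_inl_inl, flowW_inl_t, flowW_s_inl, flowW_s_t]
  rw [Finset.sum_add_distrib]
  have hfilt : S'ᶜ.filter (fun v => v ∈ leaves) = leaves \ S' := by
    ext v; simp [Finset.mem_filter, Finset.mem_sdiff, and_comm]
  have : ∑ v ∈ S'ᶜ, (if v ∈ leaves then τ else 0) = (leaves \ S').card * τ := by
    rw [← Finset.sum_filter, hfilt, Finset.sum_const, nsmul_eq_mul]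
  rw [this]
  ring

lemma lamE_le {c : V → V → ℝ≥0∞} {A B S : Finset V} (h1 : A ⊆ S) (h2 : Disjoint S B) :
    lamE c A B ≤ treeCutE c S := by
  unfold lamE
  exact biInf_le _ (Set.mem_setOf_eq ▸ ⟨h1, h2⟩)

lemma le_lamE {c : V → V → ℝ≥0∞} {A B : Finset V} {a : ℝ≥0∞}
    (h : ∀ S : Finset V, A ⊆ S → Disjoint S B → a ≤ treeCutE c S) :
    a ≤ lamE c A B := by
  unfold lamE
  exact le_iInf₂ fun S hS => h S hS.1 hS.2

end Aux


/-- `Ψ̂_T(L) ≥ τ` if and only if the minimum `s`-`t` cut (equivalently the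
maximum `s`-`t` flow) in `T_{L,τ}` equals `n·τ`. -/
theorem stmt6 {V : Type*} [Fintype V] [DecidableEq V]
    (T : SimpleGraph V) [DecidableRel T.Adj] (hT : T.IsTree)
    (w : V → V → ℝ≥0∞) (hsymm : ∀ u v, w u v = w v u)
    (hsupp : ∀ u v, w u v ≠ 0 → T.Adj u v) (hfin : ∀ u v, w u v ≠ ⊤)
    (leaves : Finset V) (hleaves : leaves = Finset.univ.filter (fun x => T.degree x = 1))
    (L : Finset V) (hL : L ⊆ leaves) (τ : ℝ≥0∞) (hτ : τ ≠ ⊤) :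
    τ ≤ PsiHatE w leaves L ↔
      minSTcut w leaves L τ = (leaves.card : ℝ≥0∞) * τ := by
  classical
  -- the trivial cut {s} shows minSTcut ≤ n·τ
  have hub : minSTcut w leaves L τ ≤ (leaves.card : ℝ≥0∞) * τ := by
    have hmem : ({Sum.inr true} : Finset (V ⊕ Bool)) ⊆ {Sum.inr true} ∧
        Disjoint ({Sum.inr true} : Finset (V ⊕ Bool)) {Sum.inr false} := by
      refine ⟨subset_rfl, by simp⟩
    have h := lamE_le (c := flowW w leaves L τ) hmem.1 hmem.2
    have hdec : ({Sum.inr true} : Finset (V ⊕ Bool)) =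
        ((∅ : Finset V).image Sum.inl ∪ {Sum.inr true}) := by simp
    rw [hdec, cut_formula] at h
    simpa [treeCutE, minSTcut] using h
  constructor
  · -- τ ≤ Ψ̂ → minSTcut = n·τ
    intro hψ
    refine le_antisymm hub ?_
    refine le_lamE fun S hsS hdisj => ?_
    have hs : Sum.inr true ∈ S := hsS (Finset.mem_singleton_self _)
    have ht : Sum.inr false ∉ S := Finset.disjoint_singleton_right.mp hdisj
    rw [S_decomp S hs ht, cut_formula]
    set S' := Finset.univ.filter (fun v => Sum.inl v ∈ S) with hS'
    by_cases hSL : (S' ∩ L).Nonempty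
    · obtain ⟨u, hu⟩ := hSL
      rw [Finset.mem_inter] at hu
      have htop : ∑ u ∈ S', (if u ∈ L then (⊤ : ℝ≥0∞) else 0) = ⊤ := by
        rw [ENNReal.sum_eq_top]
        exact ⟨u, hu.1, by simp [hu.2]⟩
      rw [htop, add_top]
      exact le_top
    · have hzero : ∑ u ∈ S', (if u ∈ L then (⊤ : ℝ≥0∞) else 0) = 0 := by
        apply Finset.sum_eq_zero
        intro u huS
        have : u ∉ L := fun huL => hSL ⟨u, Finset.mem_inter.mpr ⟨huS, huL⟩⟩
        simp [this]
      rw [hzero, add_zero]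
      set A := leaves ∩ S' with hA
      have hcard : A.card + (leaves \ S').card = leaves.card :=
        Finset.card_inter_add_card_sdiff leaves S'
      have hsplit : (leaves.card : ℝ≥0∞) * τ
          = (A.card : ℝ≥0∞) * τ + ((leaves \ S').card : ℝ≥0∞) * τ := by
        rw [← add_mul, ← Nat.cast_add, hcard]
      rw [hsplit]
      gcongr
      by_cases hAne : A.Nonempty
      · have hAsub : A ⊆ leaves \ L := by
          intro x hx
          rw [hA, Finset.mem_inter] at hx
          refine Finset.mem_sdiff.mpr ⟨hx.1, fun hxL => ?_⟩
          exact hSL ⟨x, Finset.mem_inter.mpr ⟨hx.2, hxL⟩⟩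
        have h1 : PsiHatE w leaves L ≤ lamE w A (leaves \ A) / (A.card : ℝ≥0∞) := by
          unfold PsiHatE
          exact biInf_le _ (Set.mem_setOf_eq ▸ ⟨hAne, hAsub⟩)
        have h2 : τ * (A.card : ℝ≥0∞) ≤ lamE w A (leaves \ A) := by
          have hc0 : (A.card : ℝ≥0∞) ≠ 0 := by
            simpa using Finset.card_ne_zero_of_mem hAne.choose_spec
          have hct : (A.card : ℝ≥0∞) ≠ ⊤ := ENNReal.natCast_ne_top _
          exact (ENNReal.le_div_iff_mul_le (Or.inl hc0) (Or.inl hct)).mp (hψ.trans h1)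
        have h3 : lamE w A (leaves \ A) ≤ treeCutE w S' := by
          refine lamE_le Finset.inter_subset_right ?_
          rw [Finset.disjoint_left]
          intro x hxS' hx
          rw [Finset.mem_sdiff] at hx
          exact hx.2 (Finset.mem_inter.mpr ⟨hx.1, hxS'⟩)
        calc (A.card : ℝ≥0∞) * τ = τ * A.card := mul_comm _ _
          _ ≤ lamE w A (leaves \ A) := h2
          _ ≤ treeCutE w S' := h3
      · rw [Finset.not_nonempty_iff_eq_empty] at hAne
        simp [hAne]
  · -- minSTcut = n·τ → τ ≤ Ψ̂
    intro heq
    unfold PsiHatE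
    refine le_iInf₂ fun A hA => ?_
    obtain ⟨hAne, hAsub⟩ := hA
    have hc0 : (A.card : ℝ≥0∞) ≠ 0 := by
      simpa using Finset.card_ne_zero_of_mem hAne.choose_spec
    have hct : (A.card : ℝ≥0∞) ≠ ⊤ := ENNReal.natCast_ne_top _
    rw [ENNReal.le_div_iff_mul_le (Or.inl hc0) (Or.inl hct)]
    refine le_lamE fun S' hAS' hdisj => ?_
    -- apply the min-cut bound to the cut S'.image inl ∪ {s}
    have hmem : ({Sum.inr true} : Finset (V ⊕ Bool)) ⊆ S'.image Sum.inl ∪ {Sum.inr true} ∧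
        Disjoint (S'.image Sum.inl ∪ {Sum.inr true} : Finset (V ⊕ Bool)) {Sum.inr false} := by
      constructor
      · simp
      · simp
    have key : (leaves.card : ℝ≥0∞) * τ
        ≤ treeCutE (flowW w leaves L τ) (S'.image Sum.inl ∪ {Sum.inr true}) := by
      rw [← heq]
      exact lamE_le hmem.1 hmem.2
    rw [cut_formula] at key
    -- the ∞-terms vanish
    have hzero : ∑ u ∈ S', (if u ∈ L then (⊤ : ℝ≥0∞) else 0) = 0 := by
      apply Finset.sum_eq_zero
      intro u huS
      have : u ∉ L := by
        intro huL
        have hu1 : u ∈ leaves := hL huL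
        have hu2 : u ∉ A := fun huA => (Finset.mem_sdiff.mp (hAsub huA)).2 huL
        exact (Finset.disjoint_left.mp hdisj huS) (Finset.mem_sdiff.mpr ⟨hu1, hu2⟩)
      simp [this]
    rw [hzero, add_zero] at key
    -- leaves ∩ S' = A
    have hinter : leaves ∩ S' = A := by
      apply Finset.Subset.antisymm
      · intro x hx
        rw [Finset.mem_inter] at hx
        by_contra hxA
        exact (Finset.disjoint_left.mp hdisj hx.2) (Finset.mem_sdiff.mpr ⟨hx.1, hxA⟩)
      · intro x hx
        exact Finset.mem_inter.mpr ⟨(Finset.mem_sdiff.mp (hAsub hx)).1, hAS' hx⟩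
    have hcard : A.card + (leaves \ S').card = leaves.card := by
      rw [← hinter]
      exact Finset.card_inter_add_card_sdiff leaves S'
    have hsplit : (leaves.card : ℝ≥0∞) * τ
        = (A.card : ℝ≥0∞) * τ + ((leaves \ S').card : ℝ≥0∞) * τ := by
      rw [← add_mul, ← Nat.cast_add, hcard]
    rw [hsplit] at key
    have hfin' : ((leaves \ S').card : ℝ≥0∞) * τ ≠ ⊤ :=
      ENNReal.mul_ne_top (ENNReal.natCast_ne_top _) hτ
    have := (WithTop.add_le_add_iff_right hfin').mp key
    calc τ * (A.card : ℝ≥0∞) = (A.card : ℝ≥0∞) * τ := mul_comm _ _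
      _ ≤ treeCutE w S' := this
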